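/- (Measurability of PML) In the disintegration setting, the map y ↦ D_∞(P_{X|Y=y} ‖ P_X), extended to equal +∞ on {y : ∫_{{r=0}} k(x,y) μ(dx) > 0}, is F-measurable. Equivalently, y ↦ log ess sup_{P_X} k(·,y)/r(·) (with the ∞ extension) is measurable. -/
import Mathlib


open MeasureTheory
open scoped ENNReal

lemma essSup_eq_iInf_rat {α : Type*} [MeasurableSpace α] (m : Measure α) (f : α → ℝ≥0∞) :
    essSup f m = ⨅ q : ℚ, (if m {x | (Real.toNNReal q : ℝ≥0∞) < f x} = 0
      then (Real.toNNReal q : ℝ≥0∞) else ∞) := by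
  rw [essSup_eq_sInf]
  refine le_antisymm (le_iInf fun q => ?_) ?_
  · split_ifs with h
    · exact sInf_le h
    · exact le_top
  · by_contra hlt
    push_neg at hlt
    obtain ⟨a, haS, ha⟩ := sInf_lt_iff.mp hlt
    obtain ⟨q, hq0, haq, hq⟩ := ENNReal.lt_iff_exists_rat_btwn.mp ha
    have hS : m {x | (Real.toNNReal q : ℝ≥0∞) < f x} = 0 :=
      measure_mono_null (fun x hx => lt_trans haq hx) haS
    have hle := iInf_le (fun q : ℚ => (if m {x | (Real.toNNReal q : ℝ≥0∞) < f x} = 0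
      then (Real.toNNReal q : ℝ≥0∞) else ∞)) q
    rw [if_pos hS] at hle
    exact lt_irrefl _ (hle.trans_lt hq)

/-- Measurability of pointwise maximal leakage: in the disintegration setting, the map
`y ↦ D_∞(P_{X|Y=y} ‖ P_X) = log essSup_{P_X} k(·,y)/r(·)`, extended to `+∞` on the set
`{y : ∫_{{r=0}} k(x,y) μ(dx) > 0}` (where absolute continuity fails), is measurable. -/
theorem pml_measurable
    {E F : Type*} [MeasurableSpace E] [MeasurableSpace F]
    (μ : Measure E) (ν : Measure F) [SigmaFinite μ] [SigmaFinite ν]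
    (p : E × F → ℝ≥0∞) (hp : Measurable p)
    (PXY : Measure (E × F)) [IsProbabilityMeasure PXY]
    (hPXY : PXY = (μ.prod ν).withDensity p)
    (q : F → ℝ≥0∞) (hq : ∀ y, q y = ∫⁻ x, p (x, y) ∂μ)
    (r : E → ℝ≥0∞) (hr : ∀ x, r x = ∫⁻ y, p (x, y) ∂ν)
    (k : E → F → ℝ≥0∞)
    (hk : ∀ x y, k x y = if 0 < q y then p (x, y) / q y else r x) :
    Measurable (fun y : F => ENNReal.log
      (if (∫⁻ x in {x : E | r x = 0}, k x y ∂μ) = 0 then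
        essSup (fun x : E => k x y / r x) (μ.withDensity r)
      else ∞)) := by
  have hswap : Measurable fun yx : F × E => p (yx.2, yx.1) := hp.comp measurable_swap
  have hqm : Measurable q := by
    rw [funext hq]
    exact Measurable.lintegral_prod_right' hswap
  have hrm : Measurable r := by
    rw [funext hr]
    exact Measurable.lintegral_prod_right' hp
  have hkm : Measurable fun yx : F × E => k yx.2 yx.1 := by
    simp only [hk]
    exact Measurable.ite (measurableSet_lt measurable_const (hqm.comp measurable_fst))
      (hswap.div (hqm.comp measurable_fst)) (hrm.comp measurable_snd)
  have hs0 : MeasurableSet {x : E | r x = 0} := hrm (measurableSet_singleton 0)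
  -- measurability of the condition y ↦ ∫⁻ x in {r = 0}, k x y ∂μ
  have hcm : Measurable fun y => ∫⁻ x in {x : E | r x = 0}, k x y ∂μ := by
    have heq : ∀ y, (∫⁻ x in {x : E | r x = 0}, k x y ∂μ)
        = ∫⁻ x, (if r x = 0 then k x y else 0) ∂μ := by
      intro y
      rw [← lintegral_indicator hs0]
      congr 1
      ext x
      simp [Set.indicator_apply]
    simp only [heq]
    exact Measurable.lintegral_prod_right'
      (Measurable.ite ((hrm.comp measurable_snd) (measurableSet_singleton 0))
        hkm measurable_const)
  -- measurability of y ↦ (μ.withDensity r) {x | c < k x y / r x} for each rational c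
  have hm_q : ∀ qq : ℚ, Measurable fun y =>
      (μ.withDensity r) {x | (Real.toNNReal qq : ℝ≥0∞) < k x y / r x} := by
    intro qq
    have hset : ∀ y, MeasurableSet {x | (Real.toNNReal qq : ℝ≥0∞) < k x y / r x} := by
      intro y
      exact measurableSet_lt measurable_const
        ((hkm.comp (measurable_const.prodMk measurable_id)).div hrm)
    have heq : ∀ y, (μ.withDensity r) {x | (Real.toNNReal qq : ℝ≥0∞) < k x y / r x}
        = ∫⁻ x, (if (Real.toNNReal qq : ℝ≥0∞) < k x y / r x then r x else 0) ∂μ := by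
      intro y
      rw [withDensity_apply _ (hset y), ← lintegral_indicator (hset y)]
      congr 1
      ext x
      simp [Set.indicator_apply]
    simp only [heq]
    exact Measurable.lintegral_prod_right'
      (Measurable.ite
        (measurableSet_lt measurable_const (hkm.div (hrm.comp measurable_snd)))
        (hrm.comp measurable_snd) measurable_const)
  have hinner : Measurable (fun y : F =>
      (if (∫⁻ x in {x : E | r x = 0}, k x y ∂μ) = 0 then
        essSup (fun x : E => k x y / r x) (μ.withDensity r)
      else ∞)) := by
    simp only [essSup_eq_iInf_rat]
    refine Measurable.ite (hcm (measurableSet_singleton 0)) ?_ measurable_const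
    refine Measurable.iInf fun qq => ?_
    exact Measurable.ite ((hm_q qq) (measurableSet_singleton 0))
      measurable_const measurable_const
  exact ENNReal.measurable_log.comp hinner
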